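/- If a marked floor diagram (𝒟,m) of type (α,β,γ,δ) is r-real with r ≥ 1 and n = 2d−1+|α+β+2γ+2δ|, then the marked diagrams (𝒟, m) and (𝒟, ρ_{𝒟,m,r} ∘ m) have the same underlying floor diagram and the composition ρ_{𝒟,m,r} ∘ m is again a marking of 𝒟 of type (α,β,γ,δ). -/

import Mathlib

open scoped Classical

/-- `ℕ^∞`: finitely supported sequences of nonnegative integers. -/
abbrev Vec : Type := ℕ →₀ ℕ

/-- `|α| = Σᵢ (α)ᵢ`. -/
def vabs (a : Vec) : ℕ := a.sum fun _ v => v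

/-- `Iα = Σᵢ i·(α)ᵢ`. -/
def vI (a : Vec) : ℕ := a.sum fun i v => i * v

/-- Partial sum `Σ_{j=1}^{k} (α)_j`. -/
def psum (a : Vec) (k : ℕ) : ℕ := ∑ j ∈ Finset.Icc 1 k, a j

/-- `I^α = Πᵢ i^{(α)_i}` as a rational number. -/
def Iexp (a : Vec) : ℚ := ∏ i ∈ a.support, (i : ℚ) ^ a i

/-- A weighted oriented graph: a list of oriented edges with positive weights. -/
structure WGraph (V : Type) where
  edges : List (V × V)
  weight : Fin edges.length → ℕ
  weight_pos : ∀ i, 0 < weight i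

namespace WGraph

variable {V V' : Type} [Fintype V] [Fintype V']

def tail (G : WGraph V) (i : Fin G.edges.length) : V := (G.edges.get i).1

def head (G : WGraph V) (i : Fin G.edges.length) : V := (G.edges.get i).2

def Adj (G : WGraph V) (u v : V) : Prop :=
  ∃ i, (G.tail i = u ∧ G.head i = v) ∨ (G.tail i = v ∧ G.head i = u)

def Connected (G : WGraph V) : Prop := ∀ u v : V, Relation.ReflTransGen G.Adj u v

/-- A tree: connected with Euler characteristic `#V - #E = 1`. -/
def IsTree (G : WGraph V) : Prop := G.Connected ∧ Fintype.card V = G.edges.length + 1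

/-- A source: all adjacent edges are outgoing. -/
def IsSource (G : WGraph V) (v : V) : Prop := ∀ i, G.head i ≠ v

/-- Divergence: sum of incoming weights minus sum of outgoing weights. -/
noncomputable def div (G : WGraph V) (v : V) : ℤ :=
  (∑ i, if G.head i = v then (G.weight i : ℤ) else 0)
    - ∑ i, if G.tail i = v then (G.weight i : ℤ) else 0

/-- Floor diagram of genus 0 and degree `d`. -/
def IsFloorDiagram (G : WGraph V) (d : ℕ) : Prop :=
  G.IsTree ∧ (∀ v, ¬ G.IsSource v → G.div v = 1) ∧
  (∀ v, G.IsSource v → ∃! i, G.tail i = v) ∧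
  (∑ v : V, if G.IsSource v then G.div v else 0) = -(d : ℤ)

/-- Edge adjacent to a source (`Edge^∞`). -/
def IsInfEdge (G : WGraph V) (i : Fin G.edges.length) : Prop :=
  G.IsSource (G.tail i) ∨ G.IsSource (G.head i)

/-- Adjacency between elements (vertices or edges) of the graph. -/
def ElemAdj (G : WGraph V) : V ⊕ Fin G.edges.length → V ⊕ Fin G.edges.length → Prop
  | Sum.inl v, Sum.inr e => G.tail e = v ∨ G.head e = v
  | Sum.inr e, Sum.inl v => G.tail e = v ∨ G.head e = v
  | _, _ => False

/-- One step of the natural partial order on an oriented tree. -/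
def Step (G : WGraph V) : V ⊕ Fin G.edges.length → V ⊕ Fin G.edges.length → Prop
  | Sum.inr e, Sum.inl v => G.head e = v
  | Sum.inl v, Sum.inr e => G.tail e = v
  | _, _ => False

/-- The natural (strict) partial order "greater than" on elements of an oriented tree. -/
def ElemGT (G : WGraph V) : V ⊕ Fin G.edges.length → V ⊕ Fin G.edges.length → Prop :=
  Relation.TransGen G.Step

end WGraph

/-- `n = 2d - 1 + |α+β+2γ+2δ|` where `d = Iα+Iβ+2Iγ+2Iδ`. -/
noncomputable def mn (α β γ δ : Vec) : ℕ :=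
  2 * (vI α + vI β + 2 * vI γ + 2 * vI δ) - 1 + vabs (α + β + 2 • γ + 2 • δ)

namespace WGraph

variable {V V' : Type} [Fintype V] [Fintype V']

/-- A marking of type `(α,β,γ,δ)` of a floor diagram, with marked points indexed by
`1,…,n`. -/
structure IsMarking (G : WGraph V) (α β γ δ : Vec)
    (m : ℕ → V ⊕ Fin G.edges.length) : Prop where
  floor : G.IsFloorDiagram (vI α + vI β + 2 * vI γ + 2 * vI δ)
  inj : Set.InjOn m (Set.Icc 1 (mn α β γ δ))
  mono : ∀ i ∈ Set.Icc 1 (mn α β γ δ), ∀ j ∈ Set.Icc 1 (mn α β γ δ),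
      G.ElemGT (m i) (m j) → j < i
  srcA : ∀ k, 1 ≤ k → ∀ i, psum α (k-1) + 1 ≤ i → i ≤ psum α k →
      ∃ v, m i = Sum.inl v ∧ G.IsSource v ∧ G.div v = -(k : ℤ)
  srcG : ∀ k, 1 ≤ k → ∀ i, vabs α + 2 * psum γ (k-1) + 1 ≤ i →
      i ≤ vabs α + 2 * psum γ k →
      ∃ v, m i = Sum.inl v ∧ G.IsSource v ∧ G.div v = -(k : ℤ)
  edgeCount : ∀ k, 1 ≤ k →
      {e : Fin G.edges.length | G.IsInfEdge e ∧ G.weight e = k ∧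
        ∃ i ∈ Set.Icc 1 (mn α β γ δ), m i = Sum.inr e}.ncard = β k + 2 * δ k
  srcEdge : ∀ v, G.IsSource v → ∀ e, (G.tail e = v ∨ G.head e = v) →
      Xor' (∃ i ∈ Set.Icc 1 (mn α β γ δ), m i = Sum.inl v)
           (∃ i ∈ Set.Icc 1 (mn α β γ δ), m i = Sum.inr e)

/-- `{i, i+1}` is an `r`-pair. -/
def IsRPair (α γ : Vec) (n r i : ℕ) : Prop :=
  (∃ k, 1 ≤ k ∧ k ≤ vabs γ ∧ i = vabs α + 2 * k - 1) ∨
  (∃ k, 1 ≤ k ∧ k ≤ r ∧ i = n - 2 * k + 1)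

/-- Membership in `Im(𝒟,m,r)`. -/
def InIm (G : WGraph V) (α γ : Vec) (r n : ℕ)
    (m : ℕ → V ⊕ Fin G.edges.length) (a : V ⊕ Fin G.edges.length) : Prop :=
  ∃ i, IsRPair α γ n r i ∧ ¬ G.ElemAdj (m i) (m (i+1)) ∧ (a = m i ∨ a = m (i+1))

/-- The involution `ρ_{𝒟,m,r}`. -/
noncomputable def rho (G : WGraph V) (α γ : Vec) (r n : ℕ)
    (m : ℕ → V ⊕ Fin G.edges.length) (a : V ⊕ Fin G.edges.length) :
    V ⊕ Fin G.edges.length :=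
  if h : InIm G α γ r n m a then
    (if a = m (Classical.choose h) then m (Classical.choose h + 1)
     else m (Classical.choose h))
  else a

/-- Equivalence of marked (weighted, oriented) graphs. -/
def MEquiv (G : WGraph V) (m : ℕ → V ⊕ Fin G.edges.length)
    (G' : WGraph V') (m' : ℕ → V' ⊕ Fin G'.edges.length) (n : ℕ) : Prop :=
  ∃ (φ : V ≃ V') (σ : Fin G.edges.length ≃ Fin G'.edges.length),
    (∀ e, G'.tail (σ e) = φ (G.tail e)) ∧ (∀ e, G'.head (σ e) = φ (G.head e)) ∧
    (∀ e, G'.weight (σ e) = G.weight e) ∧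
    ∀ i ∈ Set.Icc 1 n, m' i = Sum.map φ σ (m i)

/-- Isomorphism of weighted oriented graphs (forgetting markings). -/
def GEquiv (G : WGraph V) (G' : WGraph V') : Prop :=
  ∃ (φ : V ≃ V') (σ : Fin G.edges.length ≃ Fin G'.edges.length),
    (∀ e, G'.tail (σ e) = φ (G.tail e)) ∧ (∀ e, G'.head (σ e) = φ (G.head e)) ∧
    (∀ e, G'.weight (σ e) = G.weight e)

/-- `(𝒟,m)` is `r`-real. -/
def IsRReal (G : WGraph V) (α β γ δ : Vec) (r : ℕ)
    (m : ℕ → V ⊕ Fin G.edges.length) : Prop :=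
  MEquiv G m G (fun i => rho G α γ r (mn α β γ δ) m (m i)) (mn α β γ δ) ∧
  ∀ k, 1 ≤ k → {e : Fin G.edges.length | G.IsInfEdge e ∧ G.weight e = k ∧
      InIm G α γ r (mn α β γ δ) m (Sum.inr e)}.ncard = 2 * δ k

/-- Complex multiplicity `μ^ℂ`. -/
noncomputable def muC (G : WGraph V) (α β γ δ : Vec) : ℚ :=
  (Iexp (2 • α + β + 4 • γ + 2 • δ))⁻¹ * ∏ e, (G.weight e : ℚ) ^ 2

/-- `r`-real multiplicity `μ^ℝ_r`. -/
noncomputable def muR (G : WGraph V) (α β γ δ : Vec) (r : ℕ)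
    (m : ℕ → V ⊕ Fin G.edges.length) : ℚ :=
  if IsRReal G α β γ δ r m ∧
      (∀ e, 2 ∣ G.weight e → InIm G α γ r (mn α β γ δ) m (Sum.inr e)) then
    (-1 : ℚ) ^ (({v : V | ¬ G.IsSource v ∧
        InIm G α γ r (mn α β γ δ) m (Sum.inl v)}.ncard) / 2)
      * (Iexp δ)⁻¹
      * ∏ e ∈ Finset.univ.filter
          (fun e => ¬ ∃ i ∈ Set.Icc 1 (mn α β γ δ - 2 * r), m i = Sum.inr e),
          (G.weight e : ℚ)
  else 0

end WGraph

/-- A bundled marked floor diagram of type `(α,β,γ,δ)`. -/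
structure BMFD (α β γ δ : Vec) : Type 1 where
  V : Type
  [fV : Fintype V]
  G : WGraph V
  m : ℕ → V ⊕ Fin G.edges.length
  marking : G.IsMarking α β γ δ m

attribute [instance] BMFD.fV

/-- Equivalence of bundled marked floor diagrams. -/
def BMFD.Equiv {α β γ δ : Vec} (X Y : BMFD α β γ δ) : Prop :=
  WGraph.MEquiv X.G X.m Y.G Y.m (mn α β γ δ)

noncomputable def BMFD.muC' {α β γ δ : Vec} (X : BMFD α β γ δ) : ℚ :=
  WGraph.muC X.G α β γ δ

noncomputable def BMFD.muR' {α β γ δ : Vec} (X : BMFD α β γ δ) (r : ℕ) : ℚ :=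
  WGraph.muR X.G α β γ δ r X.m

lemma aux_source {V : Type} [Fintype V] (G : WGraph V)
    (φ : V ≃ V) (σ : Fin G.edges.length ≃ Fin G.edges.length)
    (hh : ∀ e, G.head (σ e) = φ (G.head e)) (v : V) :
    G.IsSource (φ v) ↔ G.IsSource v := by
  constructor
  · intro h i hiv
    exact h (σ i) (by rw [hh]; exact congrArg φ hiv)
  · intro h i hiv
    apply h (σ.symm i)
    have h2 := hh (σ.symm i)
    rw [σ.apply_symm_apply] at h2
    exact φ.injective (h2 ▸ hiv)

lemma aux_div {V : Type} [Fintype V] (G : WGraph V)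
    (φ : V ≃ V) (σ : Fin G.edges.length ≃ Fin G.edges.length)
    (ht : ∀ e, G.tail (σ e) = φ (G.tail e)) (hh : ∀ e, G.head (σ e) = φ (G.head e))
    (hw : ∀ e, G.weight (σ e) = G.weight e) (v : V) : G.div (φ v) = G.div v := by
  unfold WGraph.div
  rw [← Equiv.sum_comp σ (fun i => if G.head i = φ v then (G.weight i : ℤ) else 0),
      ← Equiv.sum_comp σ (fun i => if G.tail i = φ v then (G.weight i : ℤ) else 0)]
  congr 1 <;> apply Finset.sum_congr rfl <;> intro e _ <;>
    simp [ht, hh, hw, φ.apply_eq_iff_eq]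

lemma aux_step {V : Type} (G : WGraph V)
    (φ : V ≃ V) (σ : Fin G.edges.length ≃ Fin G.edges.length)
    (ht : ∀ e, G.tail (σ e) = φ (G.tail e)) (hh : ∀ e, G.head (σ e) = φ (G.head e))
    (a b : V ⊕ Fin G.edges.length) :
    G.Step (Sum.map φ σ a) (Sum.map φ σ b) ↔ G.Step a b := by
  cases a <;> cases b <;> simp [WGraph.Step, ht, hh, φ.apply_eq_iff_eq]

lemma aux_gt {V : Type} (G : WGraph V)
    (φ : V ≃ V) (σ : Fin G.edges.length ≃ Fin G.edges.length)
    (ht : ∀ e, G.tail (σ e) = φ (G.tail e)) (hh : ∀ e, G.head (σ e) = φ (G.head e))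
    (a b : V ⊕ Fin G.edges.length) :
    G.ElemGT (Sum.map φ σ a) (Sum.map φ σ b) → G.ElemGT a b := by
  intro h
  set ψ : V ⊕ Fin G.edges.length ≃ V ⊕ Fin G.edges.length := Equiv.sumCongr φ σ with hψ
  have hψa : ∀ x, ψ x = Sum.map φ σ x := fun x => rfl
  have key : ∀ x y, G.Step x y → G.Step (ψ.symm x) (ψ.symm y) := by
    intro x y hxy
    apply (aux_step G φ σ ht hh (ψ.symm x) (ψ.symm y)).mp
    rw [← hψa (ψ.symm x), ← hψa (ψ.symm y), ψ.apply_symm_apply, ψ.apply_symm_apply]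
    exact hxy
  have h2 : Relation.TransGen G.Step (ψ.symm (Sum.map φ σ a)) (ψ.symm (Sum.map φ σ b)) :=
    Relation.TransGen.lift ψ.symm key _ _ h
  rw [← hψa a, ← hψa b, ψ.symm_apply_apply, ψ.symm_apply_apply] at h2
  exact h2

lemma aux_inf {V : Type} [Fintype V] (G : WGraph V)
    (φ : V ≃ V) (σ : Fin G.edges.length ≃ Fin G.edges.length)
    (ht : ∀ e, G.tail (σ e) = φ (G.tail e)) (hh : ∀ e, G.head (σ e) = φ (G.head e))
    (e : Fin G.edges.length) : G.IsInfEdge (σ e) ↔ G.IsInfEdge e := by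
  unfold WGraph.IsInfEdge
  rw [ht, hh, aux_source G φ σ hh, aux_source G φ σ hh]

lemma psum_le_vabs (a : Vec) (k : ℕ) : psum a k ≤ vabs a := by
  unfold psum vabs Finsupp.sum
  exact Finset.sum_le_sum_of_ne_zero fun j _ hj => (Finsupp.mem_support_iff (f := a)).mpr hj

lemma vabs_add (a b : Vec) : vabs (a + b) = vabs a + vabs b := by
  unfold vabs
  exact Finsupp.sum_add_index' (fun _ => rfl) (fun _ _ _ => rfl)

lemma vabs_two_smul (a : Vec) : vabs (2 • a) = 2 * vabs a := by
  rw [two_smul, vabs_add, two_mul]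

/-- If a marked floor diagram `(𝒟,m)` of type `(α,β,γ,δ)` is `r`-real with `r ≥ 1`,
then (on the same underlying floor diagram `𝒟`) the composition `ρ_{𝒟,m,r} ∘ m` is
again a marking of `𝒟` of type `(α,β,γ,δ)`. -/
theorem stmt14 {V : Type} [Fintype V] (G : WGraph V) (α β γ δ : Vec) (r : ℕ)
    (m : ℕ → V ⊕ Fin G.edges.length)
    (hm : G.IsMarking α β γ δ m)
    (hrr : G.IsRReal α β γ δ r m)
    (hr1 : 1 ≤ r)
    (hr : 2 * r ≤ 2 * (vI α + vI β + 2 * vI γ + 2 * vI δ) - 1 + vabs (β + 2 • δ)) :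
    G.IsMarking α β γ δ (fun i => WGraph.rho G α γ r (mn α β γ δ) m (m i)) := by
  obtain ⟨φ, σ, ht, hh, hw, hmm⟩ := hrr.1
  set n := mn α β γ δ with hn
  set m' : ℕ → V ⊕ Fin G.edges.length :=
    fun i => WGraph.rho G α γ r (mn α β γ δ) m (m i) with hm'
  have hvabs : vabs α ≤ n ∧ vabs α + 2 * vabs γ ≤ n := by
    have hA : vabs (α + β + 2 • γ + 2 • δ)
        = vabs α + vabs β + 2 * vabs γ + 2 * vabs δ := by
      rw [vabs_add, vabs_add, vabs_add, vabs_two_smul, vabs_two_smul]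
    have hmn : n = 2 * (vI α + vI β + 2 * vI γ + 2 * vI δ) - 1 +
        vabs (α + β + 2 • γ + 2 • δ) := rfl
    omega
  have hrange : ∀ i, 1 ≤ i → i ≤ n → m' i = Sum.map φ σ (m i) := fun i h1 h2 =>
    hmm i ⟨h1, h2⟩
  constructor
  · exact hm.floor
  · intro x hx y hy hxy
    apply hm.inj hx hy
    rw [hrange x hx.1 hx.2, hrange y hy.1 hy.2] at hxy
    have : (Equiv.sumCongr φ σ) (m x) = (Equiv.sumCongr φ σ) (m y) := hxy
    exact (Equiv.sumCongr φ σ).injective this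
  · intro i hi j hj hgt
    apply hm.mono i hi j hj
    rw [hrange i hi.1 hi.2, hrange j hj.1 hj.2] at hgt
    exact aux_gt G φ σ ht hh _ _ hgt
  · intro k hk i h1 h2
    obtain ⟨v, hv, hsrc, hdiv⟩ := hm.srcA k hk i h1 h2
    refine ⟨φ v, ?_, (aux_source G φ σ hh v).mpr hsrc, hdiv ▸ aux_div G φ σ ht hh hw v⟩
    have hi1 : 1 ≤ i := le_trans (Nat.le_add_left 1 _) h1
    have hi2 : i ≤ n := le_trans h2 (le_trans (psum_le_vabs α k) hvabs.1)
    rw [hrange i hi1 hi2, hv]; rfl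
  · intro k hk i h1 h2
    obtain ⟨v, hv, hsrc, hdiv⟩ := hm.srcG k hk i h1 h2
    refine ⟨φ v, ?_, (aux_source G φ σ hh v).mpr hsrc, hdiv ▸ aux_div G φ σ ht hh hw v⟩
    have hi1 : 1 ≤ i := le_trans (Nat.le_add_left 1 _) h1
    have hi2 : i ≤ n := le_trans h2
      (le_trans (by have := psum_le_vabs γ k; omega) hvabs.2)
    rw [hrange i hi1 hi2, hv]; rfl
  · intro k hk
    rw [← hm.edgeCount k hk]
    have hset : {e : Fin G.edges.length | G.IsInfEdge e ∧ G.weight e = k ∧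
          ∃ i ∈ Set.Icc 1 (mn α β γ δ), m' i = Sum.inr e} =
        σ '' {e : Fin G.edges.length | G.IsInfEdge e ∧ G.weight e = k ∧
          ∃ i ∈ Set.Icc 1 (mn α β γ δ), m i = Sum.inr e} := by
      ext e
      rw [Equiv.image_eq_preimage_symm]
      simp only [Set.mem_setOf_eq, Set.mem_preimage, Equiv.symm_apply_apply]
      constructor
      · rintro ⟨hinf, hwt, i, hi, hie⟩
        refine ⟨by rwa [← aux_inf G φ σ ht hh, σ.apply_symm_apply],
          by rwa [← hw (σ.symm e), σ.apply_symm_apply], i, hi, ?_⟩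
        rw [hrange i hi.1 hi.2] at hie
        cases hmi : m i with
        | inl v => rw [hmi] at hie; simp only [Sum.map_inl, Sum.map_inr] at hie; exact absurd hie (by simp)
        | inr e' =>
          rw [hmi] at hie
          simp only [Sum.map_inr, Sum.inr.injEq] at hie
          rw [← hie, σ.symm_apply_apply]
      · rintro ⟨hinf, hwt, i, hi, hie⟩
        refine ⟨by rw [← σ.apply_symm_apply e]; rwa [aux_inf G φ σ ht hh],
          by rw [← σ.apply_symm_apply e, hw]; exact hwt, i, hi, ?_⟩
        rw [hrange i hi.1 hi.2, hie]
        simp only [Sum.map_inr, σ.apply_symm_apply]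
    rw [hset]
    exact Set.ncard_image_of_injective _ σ.injective
  · intro v hsrc e hadj
    have hsrc' : G.IsSource (φ.symm v) := by
      rw [← aux_source G φ σ hh, φ.apply_symm_apply]; exact hsrc
    have hadj' : G.tail (σ.symm e) = φ.symm v ∨ G.head (σ.symm e) = φ.symm v := by
      rcases hadj with h | h
      · left
        apply φ.injective
        rw [φ.apply_symm_apply, ← ht (σ.symm e), σ.apply_symm_apply, h]
      · right
        apply φ.injective
        rw [φ.apply_symm_apply, ← hh (σ.symm e), σ.apply_symm_apply, h]
    have hx := hm.srcEdge (φ.symm v) hsrc' (σ.symm e) hadj'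
    have iff1 : (∃ i ∈ Set.Icc 1 (mn α β γ δ), m' i = Sum.inl v) ↔
        (∃ i ∈ Set.Icc 1 (mn α β γ δ), m i = Sum.inl (φ.symm v)) := by
      constructor
      · rintro ⟨i, hi, hie⟩
        refine ⟨i, hi, ?_⟩
        rw [hrange i hi.1 hi.2] at hie
        cases hmi : m i with
        | inl w =>
          rw [hmi] at hie; simp only [Sum.map_inl, Sum.inl.injEq] at hie
          rw [← hie, φ.symm_apply_apply]
        | inr e' => rw [hmi] at hie; simp only [Sum.map_inl, Sum.map_inr] at hie; exact absurd hie (by simp)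
      · rintro ⟨i, hi, hie⟩
        exact ⟨i, hi, by rw [hrange i hi.1 hi.2, hie]; simp only [Sum.map_inl, φ.apply_symm_apply]⟩
    have iff2 : (∃ i ∈ Set.Icc 1 (mn α β γ δ), m' i = Sum.inr e) ↔
        (∃ i ∈ Set.Icc 1 (mn α β γ δ), m i = Sum.inr (σ.symm e)) := by
      constructor
      · rintro ⟨i, hi, hie⟩
        refine ⟨i, hi, ?_⟩
        rw [hrange i hi.1 hi.2] at hie
        cases hmi : m i with
        | inl w => rw [hmi] at hie; simp only [Sum.map_inl, Sum.map_inr] at hie; exact absurd hie (by simp)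
        | inr e' =>
          rw [hmi] at hie; simp only [Sum.map_inr, Sum.inr.injEq] at hie
          rw [← hie, σ.symm_apply_apply]
      · rintro ⟨i, hi, hie⟩
        exact ⟨i, hi, by rw [hrange i hi.1 hi.2, hie]; simp only [Sum.map_inr, σ.apply_symm_apply]⟩
    rw [show ∀ a b : Prop, Xor' a b ↔ (a ↔ ¬b) from fun a b => xor_iff_iff_not] at hx ⊢
    rw [iff1, iff2, hx]
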